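/- arXiv:1312.0877 — 7 statements merged into one kernel-verified Lean document; each statement's English description precedes it below -/
import Mathlib

section
/- Let K be an ordered field, L ⊆ K a subfield, and x ∈ K algebraic over L. Then x is neither infinitely large nor infinitely small with respect to L. -/
open Polynomial

lemma abs_mem {K : Type*} [Field K] [LinearOrder K] [IsStrictOrderedRing K] (L : Subfield K) (c : ↥L) :
    |(c : K)| ∈ L := by
  rcases abs_choice (c : K) with h | h <;> rw [h]
  · exact c.2
  · exact L.neg_mem c.2

lemma not_inf_large (K : Type*) [Field K] [LinearOrder K] [IsStrictOrderedRing K] (L : Subfield K) (x : K)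
    (hx : IsAlgebraic L x) : ¬ (∀ a ∈ L, 0 < a → a < |x|) := by
  intro H
  obtain ⟨p, hp0, hpx⟩ := hx
  set q := p * C (p.leadingCoeff)⁻¹ with hq
  have hqm : q.Monic := monic_mul_leadingCoeff_inv hp0
  have hqx : aeval x q = 0 := by rw [hq, map_mul, hpx, zero_mul]
  set n := q.natDegree with hn
  have hn0 : n ≠ 0 := by
    intro h
    have : q = 1 := (Polynomial.eq_one_of_monic_natDegree_zero hqm h)
    rw [this, map_one] at hqx
    exact one_ne_zero hqx
  have h1 : (1 : K) < |x| := H 1 L.one_mem one_pos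
  have hxpos : (0 : K) < |x| := lt_trans one_pos h1
  -- expand aeval
  have hsum : ∑ i ∈ Finset.range (n + 1), (q.coeff i : K) * x ^ i = 0 := by
    rw [← hqx, aeval_eq_sum_range]
    exact Finset.sum_congr rfl fun i _ => by rw [Algebra.smul_def]; rfl
  rw [Finset.sum_range_succ] at hsum
  have hlead : (q.coeff n : K) = 1 := by
    have := hqm.coeff_natDegree; rw [← hn] at this; rw [this]; simp
  rw [hlead, one_mul] at hsum
  have hxn : x ^ n = -∑ i ∈ Finset.range n, (q.coeff i : K) * x ^ i := by
    linarith [hsum]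
  set S : K := ∑ i ∈ Finset.range n, |(q.coeff i : K)| with hS
  have hSmem : S ∈ L := L.sum_mem fun i _ => abs_mem L _
  have hSnn : 0 ≤ S := Finset.sum_nonneg fun i _ => abs_nonneg _
  -- bound: |x|^n ≤ S * |x|^(n-1)
  have hbound : |x| ^ n ≤ S * |x| ^ (n - 1) := by
    calc |x| ^ n = |x ^ n| := (abs_pow x n).symm
      _ = |∑ i ∈ Finset.range n, (q.coeff i : K) * x ^ i| := by rw [hxn, abs_neg]
      _ ≤ ∑ i ∈ Finset.range n, |(q.coeff i : K) * x ^ i| := Finset.abs_sum_le_sum_abs _ _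
      _ ≤ ∑ i ∈ Finset.range n, |(q.coeff i : K)| * |x| ^ (n - 1) := by
          apply Finset.sum_le_sum
          intro i hi
          rw [abs_mul, abs_pow]
          apply mul_le_mul_of_nonneg_left _ (abs_nonneg _)
          have hi' := Finset.mem_range.mp hi
          exact pow_le_pow_right₀ h1.le (by omega)
      _ = S * |x| ^ (n - 1) := by rw [← Finset.sum_mul]
  have hpow : |x| ^ n = |x| ^ (n - 1) * |x| := by
    rw [← pow_succ]; congr 1; omega
  have hxS : |x| ≤ S := by
    rw [hpow] at hbound
    have hp1 : (0:K) < |x| ^ (n - 1) := pow_pos hxpos _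
    nlinarith
  have := H (S + 1) (L.add_mem hSmem L.one_mem) (by linarith)
  linarith

/-- If `x ∈ K` is algebraic over a subfield `L`, then `x` is neither
infinitely large nor infinitely small with respect to `L`. -/
theorem stmt_3 (K : Type*) [Field K] [LinearOrder K] [IsStrictOrderedRing K] (L : Subfield K) (x : K)
    (hx : IsAlgebraic L x) :
    ¬ (∀ a ∈ L, 0 < a → a < |x|) ∧ ¬ (x ≠ 0 ∧ ∀ a ∈ L, 0 < a → |x| < a) := by
  refine ⟨not_inf_large K L x hx, ?_⟩
  rintro ⟨hx0, H⟩
  apply not_inf_large K L x⁻¹ hx.inv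
  intro a ha hapos
  have hinv := H a⁻¹ (L.inv_mem ha) (inv_pos.mpr hapos)
  have hxpos : 0 < |x| := abs_pos.mpr hx0
  rw [abs_inv]
  have := inv_strictAnti₀ hxpos hinv
  rwa [inv_inv] at this
end

section
/- Let K be a real closed ordered field and A the valuation ring of elements of K not infinitely large over ℚ, with maximal ideal M of infinitesimals. If P(X) = X^r + c_{r-1}X^{r-1} + ⋯ + c_1 X + c_0 ∈ A[X] is a monic polynomial with c_0 ∈ M and c_1 ∉ M, then P has a root in M. -/
open Polynomial IntermediateField Module

section RCF

variable {K : Type*} [Field K] [LinearOrder K] [IsStrictOrderedRing K]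

/-- Nonnegative square roots of nonnegative elements. -/
lemma rcf_sqrt (hsq : ∀ x : K, 0 < x → ∃ y : K, y ^ 2 = x) :
    ∀ x : K, 0 ≤ x → ∃ y : K, 0 ≤ y ∧ y ^ 2 = x := by
  intro x hx
  rcases eq_or_lt_of_le hx with h | h
  · exact ⟨0, le_refl 0, by simp [← h]⟩
  · obtain ⟨y, hy⟩ := hsq x h
    exact ⟨|y|, abs_nonneg y, by rw [sq_abs]; exact hy⟩

/-- Solving `(c + d i)^2 = x + y i` at the level of `K`. -/
lemma rcf_sq_pair (hsq : ∀ x : K, 0 < x → ∃ y : K, y ^ 2 = x) (x y : K) :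
    ∃ c d : K, c ^ 2 - d ^ 2 = x ∧ 2 * c * d = y := by
  obtain ⟨r, hr0, hr⟩ := rcf_sqrt hsq (x ^ 2 + y ^ 2) (by positivity)
  have hrx : |x| ≤ r := by nlinarith [abs_nonneg x, sq_abs x]
  have h1 : 0 ≤ (x + r) / 2 := by cases abs_cases x <;> linarith
  have h2 : 0 ≤ (r - x) / 2 := by cases abs_cases x <;> linarith
  obtain ⟨c, hc0, hc⟩ := rcf_sqrt hsq _ h1
  obtain ⟨d0, hd0, hd⟩ := rcf_sqrt hsq _ h2
  have hcd : (2 * c * d0) ^ 2 = y ^ 2 := by nlinarith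
  rcases sq_eq_sq_iff_eq_or_eq_neg.mp hcd with h | h
  · exact ⟨c, d0, by linarith, h⟩
  · exact ⟨c, -d0, by nlinarith, by linarith [h]⟩

/-- An irreducible polynomial of odd degree over `K` is linear. -/
lemma rcf_irred_odd (hodd : ∀ P : Polynomial K, Odd P.natDegree → ∃ x : K, P.eval x = 0)
    (q : K[X]) (hq : Irreducible q) (h : Odd q.natDegree) : q.natDegree = 1 := by
  obtain ⟨x, hx⟩ := hodd q h
  have hdvd : X - C x ∣ q := dvd_iff_isRoot.mpr hx
  obtain ⟨c, rfl⟩ := hdvd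
  rcases hq.isUnit_or_isUnit rfl with h1 | h1
  · exact absurd h1 (Polynomial.not_isUnit_X_sub_C x)
  · rw [natDegree_mul (X_sub_C_ne_zero x) h1.ne_zero,
      natDegree_eq_zero_of_isUnit h1, natDegree_X_sub_C]

/-- A finite extension of `K` of odd degree is trivial. -/
lemma rcf_odd_finrank (hodd : ∀ P : Polynomial K, Odd P.natDegree → ∃ x : K, P.eval x = 0)
    (F : Type*) [Field F] [Algebra K F] [FiniteDimensional K F]
    (h : Odd (Module.finrank K F)) : Module.finrank K F = 1 := by
  have hbot : (⊤ : IntermediateField K F) = ⊥ := by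
    rw [eq_bot_iff]
    intro α _
    have hint : IsIntegral K α := IsIntegral.of_finite K α
    obtain ⟨k, hk⟩ := minpoly.degree_dvd hint
    have hodd' : Odd (minpoly K α).natDegree := (Nat.odd_mul.mp (by rwa [hk] at h)).1
    have h1 : (minpoly K α).natDegree = 1 :=
      rcf_irred_odd hodd _ (minpoly.irreducible hint) hodd'
    have hfr : Module.finrank K K⟮α⟯ = 1 := by
      rw [IntermediateField.adjoin.finrank hint, h1]
    have hb := IntermediateField.finrank_eq_one_iff.mp hfr
    have hmem := IntermediateField.mem_adjoin_simple_self K α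
    rwa [hb] at hmem
  rw [← IntermediateField.finrank_top', hbot, IntermediateField.finrank_bot]

/-- In a quadratic extension of a field of characteristic zero in which every element
is a square, every element of degree 2 is already in the base field (contradiction form). -/
lemma rcf_quad_mem_bot {F E : Type*} [Field F] [CharZero F] [Field E] [Algebra F E]
    (hFsq : ∀ z : F, ∃ w : F, w ^ 2 = z) (α : E) (hint : IsIntegral F α)
    (hdeg2 : (minpoly F α).natDegree = 2) : α ∈ (⊥ : IntermediateField F E) := by
  haveI : CharZero E := charZero_of_injective_algebraMap (algebraMap F E).injective
  have hlead : (minpoly F α).coeff 2 = 1 := by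
    have hmon := (minpoly.monic hint).coeff_natDegree
    rwa [hdeg2] at hmon
  have haev := minpoly.aeval F α
  rw [aeval_eq_sum_range, hdeg2] at haev
  rw [Finset.sum_range_succ, Finset.sum_range_succ, Finset.sum_range_one, hlead] at haev
  have haev' : algebraMap F E ((minpoly F α).coeff 0)
      + algebraMap F E ((minpoly F α).coeff 1) * α + α ^ 2 = 0 := by
    rw [Algebra.smul_def, Algebra.smul_def, Algebra.smul_def, map_one] at haev
    linear_combination haev
  obtain ⟨w, hw⟩ := hFsq ((minpoly F α).coeff 1 ^ 2 / 4 - (minpoly F α).coeff 0)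
  have hγ : (α + algebraMap F E ((minpoly F α).coeff 1) / 2) ^ 2 = (algebraMap F E w) ^ 2 := by
    rw [← map_pow, hw, map_sub, map_div₀, map_pow, map_ofNat]
    linear_combination haev'
  have hfac : (α + algebraMap F E ((minpoly F α).coeff 1) / 2 - algebraMap F E w)
      * (α + algebraMap F E ((minpoly F α).coeff 1) / 2 + algebraMap F E w) = 0 := by
    linear_combination hγ
  have hbmem : algebraMap F E ((minpoly F α).coeff 1) / 2 ∈ (⊥ : IntermediateField F E) := by
    apply div_mem
    · exact IntermediateField.mem_bot.mpr ⟨_, rfl⟩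
    · exact IntermediateField.mem_bot.mpr ⟨2, map_ofNat _ 2⟩
  have hwmem : algebraMap F E w ∈ (⊥ : IntermediateField F E) :=
    IntermediateField.mem_bot.mpr ⟨w, rfl⟩
  rcases mul_eq_zero.mp hfac with h | h
  · have hα : α = algebraMap F E w - algebraMap F E ((minpoly F α).coeff 1) / 2 := by
      linear_combination h
    rw [hα]; exact sub_mem hwmem hbmem
  · have hα : α = -algebraMap F E w - algebraMap F E ((minpoly F α).coeff 1) / 2 := by
      linear_combination h
    rw [hα]; exact sub_mem (neg_mem hwmem) hbmem

set_option maxHeartbeats 1600000 in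
/-- Artin–Schreier: every irreducible polynomial over `K` has degree at most 2. -/
lemma rcf_irred_le_two (hsq : ∀ x : K, 0 < x → ∃ y : K, y ^ 2 = x)
    (hodd : ∀ P : Polynomial K, Odd P.natDegree → ∃ x : K, P.eval x = 0)
    (g : K[X]) (hg : Irreducible g) : g.natDegree ≤ 2 := by
  classical
  have hgne : g ≠ 0 := hg.ne_zero
  have hdegx21 : (X ^ 2 + 1 : K[X]).natDegree = 2 := by compute_degree!
  have hx21 : (X ^ 2 + 1 : K[X]) ≠ 0 := fun h => by simp [h] at hdegx21
  set f : K[X] := g * (X ^ 2 + 1) with hf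
  have hfne : f ≠ 0 := mul_ne_zero hgne hx21
  set L := f.SplittingField with hL
  haveI : IsGalois K L := ⟨⟩
  -- get i ∈ L with i^2 = -1
  have hsplitsi : Splits ((X ^ 2 + 1 : K[X]).map (algebraMap K L)) :=
    (SplittingField.splits f).of_dvd (Polynomial.map_ne_zero hfne)
      (Polynomial.map_dvd _ ⟨g, mul_comm _ _⟩)
  obtain ⟨i, hi⟩ := hsplitsi.exists_eval_eq_zero (by
    intro h
    rw [degree_map, degree_eq_natDegree hx21, hdegx21] at h
    exact two_ne_zero (by exact_mod_cast h))
  have hi2 : i ^ 2 = -1 := by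
    have h1 : i ^ 2 + 1 = 0 := by simpa using hi
    linear_combination h1
  have hiint : IsIntegral K i := IsIntegral.of_finite K i
  -- the minimal polynomial of i divides X^2+1
  have hidvd : minpoly K i ∣ (X ^ 2 + 1 : K[X]) := by
    apply minpoly.dvd
    rw [map_add, map_pow, aeval_X, map_one, hi2]
    ring
  have hKideg : Module.finrank K K⟮i⟯ ≤ 2 := by
    rw [IntermediateField.adjoin.finrank hiint]
    calc (minpoly K i).natDegree ≤ (X ^ 2 + 1 : K[X]).natDegree :=
          natDegree_le_of_dvd hidvd hx21
      _ = 2 := hdegx21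
  -- every element of K⟮i⟯ is a square in K⟮i⟯
  have hKi_sq : ∀ z : K⟮i⟯, ∃ w : K⟮i⟯, w ^ 2 = z := by
    intro z
    set pb := IntermediateField.adjoin.powerBasis hiint with hpb
    have hgen : pb.gen = AdjoinSimple.gen K i := rfl
    have hgen2 : pb.gen ^ 2 = -1 := by
      apply Subtype.ext
      push_cast [hgen]
      exact hi2
    obtain ⟨fz, hfdeg, hfz⟩ := pb.exists_eq_aeval z
    have hfdeg1 : fz.natDegree ≤ 1 := by
      have hpd : Module.finrank K K⟮i⟯ = pb.dim := PowerBasis.finrank pb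
      omega
    obtain ⟨c, d, hcd1, hcd2⟩ := rcf_sq_pair hsq (fz.coeff 0) (fz.coeff 1)
    refine ⟨algebraMap K K⟮i⟯ c + algebraMap K K⟮i⟯ d * pb.gen, ?_⟩
    have hw : (algebraMap K K⟮i⟯ c + algebraMap K K⟮i⟯ d * pb.gen) ^ 2
        = algebraMap K K⟮i⟯ (fz.coeff 0) + algebraMap K K⟮i⟯ (fz.coeff 1) * pb.gen := by
      rw [← hcd1, ← hcd2, map_sub, map_pow, map_pow, map_mul, map_mul, map_ofNat]
      linear_combination (algebraMap K K⟮i⟯ d) ^ 2 * hgen2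
    rw [hw, hfz]
    conv_rhs => rw [Polynomial.eq_X_add_C_of_natDegree_le_one hfdeg1]
    rw [map_add, map_mul, aeval_C, aeval_X, aeval_C]
    ring
  -- Sylow: the Galois group of L/K is a 2-group
  haveI : Fact (Nat.Prime 2) := ⟨Nat.prime_two⟩
  obtain ⟨S⟩ : Nonempty (Sylow 2 (L ≃ₐ[K] L)) := inferInstance
  set k : ℕ := (Nat.card (L ≃ₐ[K] L)).factorization 2 with hk
  have hcardS : Nat.card (S : Subgroup (L ≃ₐ[K] L)) = 2 ^ k := Sylow.card_eq_multiplicity S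
  set F := IntermediateField.fixedField (S : Subgroup (L ≃ₐ[K] L)) with hF
  have hLF : Module.finrank F L = 2 ^ k := by
    rw [IntermediateField.finrank_fixedField_eq_card, hcardS]
  have hindexodd : Odd ((S : Subgroup (L ≃ₐ[K] L)).index) := by
    have := Sylow.not_dvd_index S
    rcases Nat.even_or_odd ((S : Subgroup (L ≃ₐ[K] L)).index) with he | ho
    · exact absurd he.two_dvd this
    · exact ho
  have htot : Module.finrank K F * Module.finrank F L = Module.finrank K L :=
    Module.finrank_mul_finrank K F L
  have hKL : Module.finrank K L = 2 ^ k * (S : Subgroup (L ≃ₐ[K] L)).index := by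
    rw [← IsGalois.card_aut_eq_finrank, ← hcardS,
      Subgroup.card_mul_index]
  have hKF : Module.finrank K F = (S : Subgroup (L ≃ₐ[K] L)).index := by
    have h2 : Module.finrank K F * 2 ^ k = (S : Subgroup (L ≃ₐ[K] L)).index * 2 ^ k := by
      calc Module.finrank K F * 2 ^ k = Module.finrank K F * Module.finrank F L := by rw [hLF]
        _ = Module.finrank K L := htot
        _ = (S : Subgroup (L ≃ₐ[K] L)).index * 2 ^ k := by rw [hKL]; ring
    exact Nat.eq_of_mul_eq_mul_right (Nat.pow_pos two_pos : 0 < 2 ^ k) h2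
  have hKFodd : Odd (Module.finrank K F) := by rwa [hKF]
  have hKF1 : Module.finrank K F = 1 := rcf_odd_finrank hodd F hKFodd
  have hKL2 : Module.finrank K L = 2 ^ k := by
    rw [← htot, hKF1, one_mul, hLF]
  -- now over K⟮i⟯
  haveI : FiniteDimensional K⟮i⟯ L := FiniteDimensional.right K K⟮i⟯ L
  have htot2 : Module.finrank K K⟮i⟯ * Module.finrank K⟮i⟯ L = Module.finrank K L :=
    Module.finrank_mul_finrank K K⟮i⟯ L
  have hdvd2 : Module.finrank K⟮i⟯ L ∣ 2 ^ k := by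
    rw [← hKL2]; exact Dvd.intro_left _ htot2
  obtain ⟨m, hmle, hm⟩ := (Nat.dvd_prime_pow Nat.prime_two).mp hdvd2
  have hm0 : m = 0 := by
    by_contra hm0
    have hcardG' : Nat.card (L ≃ₐ[K⟮i⟯] L) = 2 ^ m := by
      rw [IsGalois.card_aut_eq_finrank, hm]
    obtain ⟨H', hH'⟩ := Sylow.exists_subgroup_card_pow_prime 2 (n := m - 1)
      (by rw [hcardG']; exact pow_dvd_pow 2 (Nat.sub_le m 1))
    set E := IntermediateField.fixedField H' with hE
    have hEL : Module.finrank E L = 2 ^ (m - 1) := by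
      rw [IntermediateField.finrank_fixedField_eq_card, hH']
    have htot3 : Module.finrank K⟮i⟯ E * Module.finrank E L = Module.finrank K⟮i⟯ L :=
      Module.finrank_mul_finrank K⟮i⟯ E L
    have hE2 : Module.finrank K⟮i⟯ E = 2 := by
      have hh : Module.finrank K⟮i⟯ E * 2 ^ (m - 1) = 2 * 2 ^ (m - 1) := by
        obtain ⟨m', rfl⟩ : ∃ m', m = m' + 1 := ⟨m - 1, by omega⟩
        have h3 : Module.finrank K⟮i⟯ E * Module.finrank E L = 2 ^ (m' + 1) := by
          rw [htot3, hm]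
        rw [hEL, show m' + 1 - 1 = m' from rfl, pow_succ] at h3
        rw [show m' + 1 - 1 = m' from rfl]
        rw [h3]
        ring
      exact Nat.eq_of_mul_eq_mul_right (Nat.pow_pos two_pos : 0 < 2 ^ (m - 1)) hh
    -- pick α ∈ E not in the base field K⟮i⟯
    have hex : ∃ α : E, α ∉ (⊥ : IntermediateField K⟮i⟯ E) := by
      by_contra hall
      push_neg at hall
      have htopbot : (⊤ : IntermediateField K⟮i⟯ E) = ⊥ := by
        rw [eq_bot_iff]; intro x _; exact hall x
      have h1 : Module.finrank K⟮i⟯ E = 1 := by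
        rw [← IntermediateField.finrank_top', htopbot, IntermediateField.finrank_bot]
      rw [hE2] at h1
      exact absurd h1 (by norm_num)
    obtain ⟨α, hα⟩ := hex
    have hint : IsIntegral K⟮i⟯ α := IsIntegral.of_finite _ α
    have hdeg2 : (minpoly K⟮i⟯ α).natDegree = 2 := by
      have hdvd := minpoly.degree_dvd hint
      rw [hE2] at hdvd
      have hne1 : (minpoly K⟮i⟯ α).natDegree ≠ 1 := by
        intro h1
        have hb := IntermediateField.finrank_eq_one_iff.mp
          (by rw [IntermediateField.adjoin.finrank hint, h1])
        have hmem := IntermediateField.mem_adjoin_simple_self K⟮i⟯ α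
        rw [hb] at hmem
        exact hα hmem
      rcases (Nat.dvd_prime Nat.prime_two).mp hdvd with h1 | h1
      · exact absurd h1 hne1
      · exact h1
    haveI : CharZero K⟮i⟯ := charZero_of_injective_algebraMap (algebraMap K K⟮i⟯).injective
    exact hα (rcf_quad_mem_bot hKi_sq α hint hdeg2)
  -- conclude: [L : K] ≤ 2
  have hKiL1 : Module.finrank K⟮i⟯ L = 1 := by rw [hm, hm0, pow_zero]
  have hKLle : Module.finrank K L ≤ 2 := by
    rw [← htot2, hKiL1, mul_one]; exact hKideg
  -- the degree of g is at most [L : K]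
  have hgsplit : Splits (g.map (algebraMap K L)) :=
    (SplittingField.splits f).of_dvd (Polynomial.map_ne_zero hfne)
      (Polynomial.map_dvd _ ⟨_, rfl⟩)
  have hgdeg0 : g.natDegree ≠ 0 := hg.natDegree_pos.ne'
  obtain ⟨ρ, hρ⟩ := hgsplit.exists_eval_eq_zero (by
    intro h
    rw [degree_map] at h
    exact hgdeg0 (natDegree_eq_zero_iff_degree_le_zero.mpr (le_of_eq h)))
  have hρ' : aeval ρ g = 0 := by rwa [aeval_def, ← eval_map]
  have hmindvd : minpoly K ρ ∣ g := minpoly.dvd K ρ hρ'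
  obtain ⟨u, hu⟩ := hmindvd
  have hρint : IsIntegral K ρ := IsIntegral.of_finite K ρ
  have huunit : IsUnit u := by
    rcases hg.isUnit_or_isUnit hu with h | h
    · exact absurd h (minpoly.not_isUnit K ρ)
    · exact h
  have hgnd : g.natDegree = (minpoly K ρ).natDegree := by
    rw [hu, natDegree_mul (minpoly.ne_zero hρint) huunit.ne_zero,
      natDegree_eq_zero_of_isUnit huunit, add_zero]
  rw [hgnd]
  exact le_trans (minpoly.natDegree_le ρ) hKLle

/-- A quadratic polynomial with no root has constant sign. -/
lemma rcf_quad_sign (hsq : ∀ x : K, 0 < x → ∃ y : K, y ^ 2 = x)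
    (q : K[X]) (h2 : q.natDegree = 2) (hnr : ∀ x : K, q.eval x ≠ 0) (u v : K) :
    0 < q.eval u * q.eval v := by
  have hqne : q ≠ 0 := fun h => by simp [h] at h2
  have ha : q.coeff 2 ≠ 0 := by
    have hl : q.leadingCoeff ≠ 0 := leadingCoeff_ne_zero.mpr hqne
    rwa [leadingCoeff, h2] at hl
  have he : ∀ x : K, q.eval x = q.coeff 0 + q.coeff 1 * x + q.coeff 2 * x ^ 2 := by
    intro x
    rw [eval_eq_sum_range, h2, Finset.sum_range_succ, Finset.sum_range_succ,
      Finset.sum_range_one]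
    ring
  set a := q.coeff 2
  set b := q.coeff 1
  set c := q.coeff 0
  have hdisc : b ^ 2 - 4 * a * c < 0 := by
    by_contra hd
    push_neg at hd
    obtain ⟨s, hs0, hs⟩ := rcf_sqrt hsq _ hd
    set x := (-b + s) / (2 * a) with hx
    have h2a : 2 * a ≠ 0 := by simp [ha]
    have h2ax : 2 * a * x + b = s := by
      rw [hx]
      field_simp
      ring
    apply hnr x
    rw [he]
    have hexp : 4 * a * (c + b * x + a * x ^ 2) = (2 * a * x + b) ^ 2 - (b ^ 2 - 4 * a * c) := by
      ring
    have hz : 4 * a * (c + b * x + a * x ^ 2) = 0 := by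
      rw [hexp, h2ax, ← hs, sub_self]
    have h4a : (4 : K) * a ≠ 0 := by simp [ha]
    exact (mul_eq_zero.mp hz).resolve_left h4a
  have key : ∀ x : K, 0 < a * q.eval x := by
    intro x
    rw [he]
    nlinarith [sq_nonneg (2 * a * x + b)]
  have ha2 : 0 < a ^ 2 := by positivity
  nlinarith [mul_pos (key u) (key v), ha2]

set_option maxHeartbeats 1600000 in
/-- Intermediate value theorem for polynomials over `K`. -/
lemma rcf_ivt (hsq : ∀ x : K, 0 < x → ∃ y : K, y ^ 2 = x)
    (hodd : ∀ P : Polynomial K, Odd P.natDegree → ∃ x : K, P.eval x = 0) :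
    ∀ n : ℕ, ∀ P : K[X], P.natDegree ≤ n → ∀ u v : K, u < v →
      P.eval u < 0 → 0 < P.eval v → ∃ x : K, u < x ∧ x < v ∧ P.eval x = 0 := by
  intro n
  induction n with
  | zero =>
    intro P hP u v huv hu hv
    rw [Nat.le_zero] at hP
    rw [Polynomial.eq_C_of_natDegree_eq_zero hP, eval_C] at hu hv
    linarith
  | succ n ih =>
    intro P hP u v huv hu hv
    by_cases h0 : P.natDegree = 0
    · rw [Polynomial.eq_C_of_natDegree_eq_zero h0, eval_C] at hu hv
      linarith
    have hPne : P ≠ 0 := fun h => by rw [h, eval_zero] at hu; exact absurd hu (lt_irrefl 0)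
    obtain ⟨q, hqirr, hqdvd⟩ := Polynomial.exists_irreducible_of_natDegree_ne_zero h0
    by_cases hroot : ∃ t : K, q.eval t = 0
    · obtain ⟨t, ht⟩ := hroot
      have hXt : (X - C t) ∣ P := (dvd_iff_isRoot.mpr ht).trans hqdvd
      obtain ⟨P₁, hP1⟩ := hXt
      have hP1ne : P₁ ≠ 0 := fun h => hPne (by rw [hP1, h, mul_zero])
      have hdegsum : P.natDegree = 1 + P₁.natDegree := by
        rw [hP1, natDegree_mul (X_sub_C_ne_zero t) hP1ne, natDegree_X_sub_C]
      have hdeg1 : P₁.natDegree ≤ n := by omega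
      have hevalu : P.eval u = (u - t) * P₁.eval u := by rw [hP1]; simp
      have hevalv : P.eval v = (v - t) * P₁.eval v := by rw [hP1]; simp
      rcases lt_trichotomy t u with htu | htu | htu
      · have h1 : P₁.eval u < 0 := by nlinarith [hevalu ▸ hu]
        have h2 : 0 < P₁.eval v := by nlinarith [hevalv ▸ hv]
        obtain ⟨x, hx1, hx2, hx3⟩ := ih P₁ hdeg1 u v huv h1 h2
        exact ⟨x, hx1, hx2, by rw [hP1, eval_mul, hx3, mul_zero]⟩
      · rw [hevalu, ← htu, sub_self, zero_mul] at hu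
        exact absurd hu (lt_irrefl 0)
      · rcases lt_trichotomy t v with htv | htv | htv
        · exact ⟨t, htu, htv, by rw [hP1, eval_mul, eval_sub, eval_X, eval_C, sub_self, zero_mul]⟩
        · rw [hevalv, htv, sub_self, zero_mul] at hv
          exact absurd hv (lt_irrefl 0)
        · have h1 : 0 < P₁.eval u := by nlinarith [hevalu ▸ hu]
          have h2 : P₁.eval v < 0 := by nlinarith [hevalv ▸ hv]
          obtain ⟨x, hx1, hx2, hx3⟩ := ih (-P₁) (by rwa [natDegree_neg]) u v huv
            (by rw [eval_neg]; linarith) (by rw [eval_neg]; linarith)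
          rw [eval_neg, neg_eq_zero] at hx3
          exact ⟨x, hx1, hx2, by rw [hP1, eval_mul, hx3, mul_zero]⟩
    · push_neg at hroot
      have hq2 : q.natDegree = 2 := by
        have hle := rcf_irred_le_two hsq hodd q hqirr
        have h0q : q.natDegree ≠ 0 := by
          intro h
          have hq0 : q = C (q.coeff 0) := Polynomial.eq_C_of_natDegree_eq_zero h
          refine hqirr.not_isUnit ?_
          rw [hq0]
          exact isUnit_C.mpr (isUnit_iff_ne_zero.mpr
            (fun hc => hqirr.ne_zero (by rw [hq0, hc, map_zero])))
        have h1q : q.natDegree ≠ 1 := by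
          intro h
          have hc1 : q.coeff 1 ≠ 0 := by
            have hl : q.leadingCoeff ≠ 0 := leadingCoeff_ne_zero.mpr hqirr.ne_zero
            rwa [leadingCoeff, h] at hl
          apply hroot (-(q.coeff 0) / q.coeff 1)
          conv_lhs => rw [Polynomial.eq_X_add_C_of_natDegree_le_one (le_of_eq h)]
          rw [eval_add, eval_mul, eval_C, eval_X, eval_C]
          field_simp
          simp [coeff_C, coeff_X]
          field_simp
          ring
        omega
      obtain ⟨R, hR⟩ := hqdvd
      have hRne : R ≠ 0 := fun h => hPne (by rw [hR, h, mul_zero])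
      have hdegsum : P.natDegree = 2 + R.natDegree := by
        rw [hR, natDegree_mul hqirr.ne_zero hRne, hq2]
      have hdegR : R.natDegree ≤ n := by omega
      have hsign := rcf_quad_sign hsq q hq2 hroot u v
      have hu' : P.eval u = q.eval u * R.eval u := by rw [hR, eval_mul]
      have hv' : P.eval v = q.eval v * R.eval v := by rw [hR, eval_mul]
      rcases lt_trichotomy (q.eval u) 0 with hqu | hqu | hqu
      · have hqv : q.eval v < 0 := by nlinarith
        have h1 : 0 < R.eval u := by nlinarith [hu' ▸ hu]
        have h2 : R.eval v < 0 := by nlinarith [hv' ▸ hv]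
        obtain ⟨x, hx1, hx2, hx3⟩ := ih (-R) (by rwa [natDegree_neg]) u v huv
          (by rw [eval_neg]; linarith) (by rw [eval_neg]; linarith)
        rw [eval_neg, neg_eq_zero] at hx3
        exact ⟨x, hx1, hx2, by rw [hR, eval_mul, hx3, mul_zero]⟩
      · exact absurd hqu (hroot u)
      · have hqv : 0 < q.eval v := by nlinarith
        have h1 : R.eval u < 0 := by nlinarith [hu' ▸ hu]
        have h2 : 0 < R.eval v := by nlinarith [hv' ▸ hv]
        obtain ⟨x, hx1, hx2, hx3⟩ := ih R hdegR u v huv h1 h2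
        exact ⟨x, hx1, hx2, by rw [hR, eval_mul, hx3, mul_zero]⟩

end RCF

set_option maxHeartbeats 1600000 in
/-- Over a real closed field `K` (every positive element is a square and every
odd-degree polynomial has a root), let `A` be the valuation ring of elements not infinitely
large over `ℚ` and `M` its maximal ideal of infinitesimals. Every monic polynomial over `A`
of positive degree whose constant term lies in `M` and whose linear coefficient is not in `M`
(an N-polynomial) has a root in `M`. -/
theorem stmt_5 (K : Type*) [Field K] [LinearOrder K] [IsStrictOrderedRing K]
    (hsq : ∀ x : K, 0 < x → ∃ y : K, y ^ 2 = x)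
    (hodd : ∀ P : Polynomial K, Odd P.natDegree → ∃ x : K, P.eval x = 0)
    (hna : ∃ x : K, ∀ n : ℕ, (n : K) < x)
    (P : Polynomial K) (hmonic : P.Monic) (hdeg : 1 ≤ P.natDegree)
    (hcoeff : ∀ i, ∃ n : ℕ, |P.coeff i| ≤ (n : K))
    (hc0 : ∀ n : ℕ, 0 < n → |P.coeff 0| < 1 / (n : K))
    (hc1 : ¬ (∀ n : ℕ, 0 < n → |P.coeff 1| < 1 / (n : K))) :
    ∃ x : K, (∀ n : ℕ, 0 < n → |x| < 1 / (n : K)) ∧ P.eval x = 0 := by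
  classical
  push_neg at hc1
  obtain ⟨n₁, hn₁pos, hn₁⟩ := hc1
  by_cases hc0z : P.coeff 0 = 0
  · refine ⟨0, fun n hn => ?_, ?_⟩
    · rw [abs_zero]
      positivity
    · rw [← Polynomial.coeff_zero_eq_eval_zero, hc0z]
  set r := P.natDegree with hr
  choose nb hnb using hcoeff
  set N : ℕ := (Finset.range (r + 1)).sup nb with hNdef
  have hN : ∀ i ∈ Finset.range (r + 1), |P.coeff i| ≤ (N : K) := fun i hi =>
    (hnb i).trans (Nat.cast_le.mpr (Finset.le_sup hi))
  obtain ⟨s, hs0, hs2⟩ := rcf_sqrt hsq |P.coeff 0| (abs_nonneg _)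
  have hspos : 0 < s := by
    rcases hs0.eq_or_lt with h | h
    · exfalso
      rw [← h] at hs2
      simp only [ne_eq, OfNat.ofNat_ne_zero, not_false_eq_true, zero_pow] at hs2
      exact hc0z (abs_eq_zero.mp hs2.symm)
    · exact h
  have hsinf : ∀ n : ℕ, 0 < n → s < 1 / (n : K) := by
    intro n hn
    by_contra hcon
    push_neg at hcon
    have h1 := hc0 (n ^ 2) (by positivity)
    rw [← hs2] at h1
    have hnn : (0 : K) < (n : K) := by exact_mod_cast hn
    have hcast : ((n ^ 2 : ℕ) : K) = (n : K) ^ 2 := by push_cast; ring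
    rw [hcast] at h1
    have h2 : (1 : K) / (n : K) ^ 2 ≤ s ^ 2 := by
      have : (1 : K) / (n : K) ^ 2 = (1 / (n : K)) ^ 2 := by ring
      rw [this]
      have h1n : (0 : K) < 1 / (n : K) := by positivity
      nlinarith
    linarith
  have hs1 : s < 1 := lt_of_lt_of_le (hsinf 1 one_pos) (by norm_num)
  -- decomposition of the evaluation
  set T : K → K := fun t => ∑ i ∈ Finset.Ico 2 (r + 1), P.coeff i * t ^ i with hT
  have heval : ∀ t : K, P.eval t = P.coeff 0 + P.coeff 1 * t + T t := by
    intro t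
    rw [eval_eq_sum_range, ← hr, Finset.range_eq_Ico,
      ← Finset.sum_Ico_consecutive _ (by omega : 0 ≤ 2) (by omega : 2 ≤ r + 1)]
    have h02 : ∑ i ∈ Finset.Ico 0 2, P.coeff i * t ^ i = P.coeff 0 + P.coeff 1 * t := by
      rw [← Finset.range_eq_Ico, Finset.sum_range_succ, Finset.sum_range_one]
      ring
    rw [h02]
  have hTb : ∀ t : K, |t| = s → |T t| ≤ (N : K) * (r : K) * s ^ 2 := by
    intro t ht
    calc |T t| ≤ ∑ i ∈ Finset.Ico 2 (r + 1), |P.coeff i * t ^ i| :=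
          Finset.abs_sum_le_sum_abs _ _
      _ ≤ ∑ _i ∈ Finset.Ico 2 (r + 1), (N : K) * s ^ 2 := by
          apply Finset.sum_le_sum
          intro i hi
          rw [abs_mul, abs_pow, ht]
          have hiN : |P.coeff i| ≤ (N : K) :=
            hN i (Finset.mem_range.mpr (Finset.mem_Ico.mp hi).2)
          have hsi : s ^ i ≤ s ^ 2 :=
            pow_le_pow_of_le_one hs0 hs1.le (Finset.mem_Ico.mp hi).1
          exact mul_le_mul hiN hsi (by positivity) (by positivity)
      _ ≤ (N : K) * (r : K) * s ^ 2 := by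
          rw [Finset.sum_const, nsmul_eq_mul, Nat.card_Ico]
          have hcard : ((r + 1 - 2 : ℕ) : K) ≤ (r : K) := by
            have : (r + 1 - 2 : ℕ) ≤ r := by omega
            exact_mod_cast this
          have hNs : (0 : K) ≤ (N : K) * s ^ 2 := by positivity
          nlinarith
  -- sign bookkeeping
  obtain ⟨e, he1, hee⟩ : ∃ e : K, P.coeff 1 * e = |P.coeff 1| ∧ (e = 1 ∨ e = -1) := by
    rcases le_or_gt 0 (P.coeff 1) with h | h
    · exact ⟨1, by rw [mul_one, abs_of_nonneg h], Or.inl rfl⟩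
    · exact ⟨-1, by rw [mul_neg_one, abs_of_neg h], Or.inr rfl⟩
  have hes : |e * s| = s := by
    rcases hee with rfl | rfl
    · rw [one_mul, abs_of_nonneg hs0]
    · rw [neg_one_mul, abs_neg, abs_of_nonneg hs0]
  -- the key smallness estimate
  set m : ℕ := n₁ * (1 + N * r) with hm
  have hmpos : 0 < m := Nat.mul_pos hn₁pos (by omega)
  have hsm := hsinf m hmpos
  have hftail : (1 + (N : K) * (r : K)) * s < |P.coeff 1| := by
    have hcast : ((m : ℕ) : K) = (n₁ : K) * (1 + (N : K) * (r : K)) := by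
      rw [hm]; push_cast; ring
    have hn1pos' : (0 : K) < (n₁ : K) := by exact_mod_cast hn₁pos
    have hpos2 : (0 : K) < 1 + (N : K) * (r : K) := by positivity
    have h1 : s < 1 / ((n₁ : K) * (1 + (N : K) * (r : K))) := by rwa [hcast] at hsm
    have h2 : (1 + (N : K) * (r : K)) * s < 1 / (n₁ : K) := by
      calc (1 + (N : K) * (r : K)) * s
          < (1 + (N : K) * (r : K)) * (1 / ((n₁ : K) * (1 + (N : K) * (r : K)))) :=
            mul_lt_mul_of_pos_left h1 hpos2
        _ = 1 / (n₁ : K) := by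
            field_simp
    linarith [hn₁]
  have hc0low : -(s ^ 2) ≤ P.coeff 0 := by
    rw [hs2]; exact neg_abs_le _
  have hc0high : P.coeff 0 ≤ s ^ 2 := by
    rw [hs2]; exact le_abs_self _
  have hmul := mul_lt_mul_of_pos_right hftail hspos
  have hTp := hTb (e * s) hes
  have hTm := hTb (-(e * s)) (by rw [abs_neg]; exact hes)
  have hpos : 0 < P.eval (e * s) := by
    rw [heval]
    have hc1es : P.coeff 1 * (e * s) = |P.coeff 1| * s := by rw [← mul_assoc, he1]
    rw [hc1es]
    have hTlow : -((N : K) * (r : K) * s ^ 2) ≤ T (e * s) := neg_le_of_abs_le hTp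
    nlinarith
  have hneg : P.eval (-(e * s)) < 0 := by
    rw [heval]
    have hc1es : P.coeff 1 * -(e * s) = -(|P.coeff 1| * s) := by
      rw [mul_neg, ← mul_assoc, he1]
    rw [hc1es]
    have hThigh : T (-(e * s)) ≤ (N : K) * (r : K) * s ^ 2 := le_of_abs_le hTm
    nlinarith
  -- apply the intermediate value theorem on (-s, s)
  have hroot : ∃ x : K, -s < x ∧ x < s ∧ P.eval x = 0 := by
    rcases hee with rfl | rfl
    · rw [one_mul] at hpos hneg
      obtain ⟨x, hx1, hx2, hx3⟩ := rcf_ivt hsq hodd r P le_rfl (-s) s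
        (by linarith) hneg hpos
      exact ⟨x, hx1, hx2, hx3⟩
    · rw [neg_one_mul] at hpos hneg
      rw [neg_neg] at hneg
      obtain ⟨x, hx1, hx2, hx3⟩ := rcf_ivt hsq hodd r (-P)
        (by rw [natDegree_neg]) (-s) s
        (by linarith) (by rw [eval_neg]; linarith) (by rw [eval_neg]; linarith)
      rw [eval_neg, neg_eq_zero] at hx3
      exact ⟨x, hx1, hx2, hx3⟩
  obtain ⟨x, hx1, hx2, hx3⟩ := hroot
  refine ⟨x, fun n hn => ?_, hx3⟩
  have : |x| < s := abs_lt.mpr ⟨hx1, hx2⟩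
  exact this.trans (hsinf n hn)
end

section
/- Let K be a real closed ordered field and A a valuation subring of K with maximal ideal M. If a monic polynomial p(X) ∈ A[X] with constant term in M and linear coefficient not in M factors as a product of two monic polynomials q(X)·r(X) in A[X], then exactly one of the factors has constant term in M and linear coefficient not in M. -/
/-- Let `K` be real closed, `A` a valuation subring with maximal ideal `M`
(the nonunits of `A`). If a monic N-polynomial `p` (constant term in `M`, linear coefficient
not in `M`) factors as a product of two monic polynomials `q·r` with coefficients in `A`,
then exactly one of the factors is an N-polynomial. -/
theorem stmt_6 (K : Type*) [Field K] [LinearOrder K] [IsStrictOrderedRing K]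
    (hsq : ∀ x : K, 0 < x → ∃ y : K, y ^ 2 = x)
    (hodd : ∀ P : Polynomial K, Odd P.natDegree → ∃ x : K, P.eval x = 0)
    (A : Subring K) (hval : ∀ x : K, x ≠ 0 → x ∈ A ∨ x⁻¹ ∈ A)
    (M : Set K) (hM : ∀ x : K, x ∈ M ↔ x ∈ A ∧ (x = 0 ∨ x⁻¹ ∉ A))
    (p q r : Polynomial K)
    (hqA : ∀ i, q.coeff i ∈ A) (hrA : ∀ i, r.coeff i ∈ A)
    (hp : p.Monic) (hq : q.Monic) (hr : r.Monic)
    (hfac : p = q * r)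
    (hp0 : p.coeff 0 ∈ M) (hp1 : p.coeff 1 ∉ M) :
    ((q.coeff 0 ∈ M ∧ q.coeff 1 ∉ M) ∧ ¬ (r.coeff 0 ∈ M ∧ r.coeff 1 ∉ M)) ∨
    (¬ (q.coeff 0 ∈ M ∧ q.coeff 1 ∉ M) ∧ (r.coeff 0 ∈ M ∧ r.coeff 1 ∉ M)) := by
  -- M is closed under multiplication by elements of A
  have hmul : ∀ a x : K, a ∈ A → x ∈ M → a * x ∈ M := by
    intro a x ha hx
    rcases (hM x).1 hx with ⟨hxA, hx0⟩
    refine (hM _).2 ⟨mul_mem ha hxA, ?_⟩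
    rcases eq_or_ne (a * x) 0 with h | h
    · exact Or.inl h
    · refine Or.inr fun hinv => ?_
      have hx0' : x ≠ 0 := right_ne_zero_of_mul h
      rcases hx0 with h0 | hni
      · exact hx0' h0
      · apply hni
        have : x⁻¹ = a * (a * x)⁻¹ := by
          have ha0 : a ≠ 0 := left_ne_zero_of_mul h
          field_simp
        rw [this]
        exact mul_mem ha hinv
  -- M is closed under addition
  have hadd : ∀ x y : K, x ∈ M → y ∈ M → x + y ∈ M := by
    intro x y hx hy
    rcases (hM x).1 hx with ⟨hxA, hx0⟩
    rcases (hM y).1 hy with ⟨hyA, hy0⟩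
    refine (hM _).2 ⟨add_mem hxA hyA, ?_⟩
    rcases eq_or_ne (x + y) 0 with h | h
    · exact Or.inl h
    refine Or.inr fun hinv => ?_
    rcases eq_or_ne x 0 with hx' | hx'
    · rcases hy0 with h0 | hni
      · exact h (by rw [hx', h0, add_zero]
        )
      · apply hni; have : y⁻¹ = (x + y)⁻¹ := by rw [hx', zero_add]
        rw [this]; exact hinv
    rcases eq_or_ne y 0 with hy' | hy'
    · rcases hx0 with h0 | hni
      · exact hx' h0
      · apply hni; have : x⁻¹ = (x + y)⁻¹ := by rw [hy', add_zero]
        rw [this]; exact hinv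
    rcases hval (x / y) (div_ne_zero hx' hy') with hd | hd
    · have hni : y⁻¹ ∉ A := hy0.resolve_left hy'
      apply hni
      have : y⁻¹ = (x / y + 1) * (x + y)⁻¹ := by
        field_simp
      rw [this]
      exact mul_mem (add_mem hd A.one_mem) hinv
    · have hni : x⁻¹ ∉ A := hx0.resolve_left hx'
      rw [inv_div] at hd
      apply hni
      have : x⁻¹ = (y / x + 1) * (x + y)⁻¹ := by
        field_simp
        ring
      rw [this]
      exact mul_mem (add_mem hd A.one_mem) hinv
  -- M is prime
  have hprime : ∀ x y : K, x ∈ A → y ∈ A → x * y ∈ M → x ∈ M ∨ y ∈ M := by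
    intro x y hxA hyA hxy
    by_contra hc
    push_neg at hc
    have hx : x = 0 ∨ x⁻¹ ∉ A → False := fun h => hc.1 ((hM x).2 ⟨hxA, h⟩)
    have hy : y = 0 ∨ y⁻¹ ∉ A → False := fun h => hc.2 ((hM y).2 ⟨hyA, h⟩)
    have hx0 : x ≠ 0 := fun h => hx (Or.inl h)
    have hy0 : y ≠ 0 := fun h => hy (Or.inl h)
    have hxi : x⁻¹ ∈ A := by by_contra h; exact hx (Or.inr h)
    have hyi : y⁻¹ ∈ A := by by_contra h; exact hy (Or.inr h)
    rcases (hM _).1 hxy with ⟨_, h0 | hni⟩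
    · exact (mul_ne_zero hx0 hy0) h0
    · exact hni (by rw [mul_inv]; exact mul_mem hxi hyi)
  -- coefficient computations
  have h0 : q.coeff 0 * r.coeff 0 ∈ M := by
    rwa [hfac, Polynomial.mul_coeff_zero] at hp0
  have h1 : q.coeff 0 * r.coeff 1 + q.coeff 1 * r.coeff 0 ∉ M := by
    intro h
    apply hp1
    rw [hfac, Polynomial.coeff_mul]
    rw [Finset.Nat.sum_antidiagonal_eq_sum_range_succ_mk]
    simpa [Finset.sum_range_succ] using h
  have main : ∀ a b c d : K, a ∈ A → b ∈ A → c ∈ A → d ∈ A → a ∈ M →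
      a * d + b * c ∉ M → (a ∈ M ∧ b ∉ M) ∧ ¬ (c ∈ M ∧ d ∉ M) := by
    intro a b c d haA hbA hcA hdA haM hsum
    have hbc : b * c ∉ M := fun h => hsum (hadd _ _ (by rw [mul_comm]; exact hmul _ _ hdA haM) h)
    have hb : b ∉ M := fun h => hbc (by rw [mul_comm]; exact hmul _ _ hcA h)
    have hc : c ∉ M := fun h => hbc (hmul _ _ hbA h)
    exact ⟨⟨haM, hb⟩, fun h => hc h.1⟩
  rcases hprime _ _ (hqA 0) (hrA 0) h0 with hq0 | hr0
  · exact Or.inl (main _ _ _ _ (hqA 0) (hqA 1) (hrA 0) (hrA 1) hq0 h1)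
  · by_cases hq0 : q.coeff 0 ∈ M
    · exact Or.inl (main _ _ _ _ (hqA 0) (hqA 1) (hrA 0) (hrA 1) hq0 h1)
    · have h1' : r.coeff 0 * q.coeff 1 + r.coeff 1 * q.coeff 0 ∉ M := by
        intro h; apply h1; rw [show q.coeff 0 * r.coeff 1 + q.coeff 1 * r.coeff 0 =
          r.coeff 0 * q.coeff 1 + r.coeff 1 * q.coeff 0 by ring]; exact h
      have := main _ _ _ _ (hrA 0) (hrA 1) (hqA 0) (hqA 1) hr0 h1'
      exact Or.inr ⟨fun h => hq0 h.1, this.1⟩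
end

section
/- Let K be a non-Archimedean ordered field with a topologically nilpotent element ε (0 < ε and εⁿ → 0 in the order topology). If L is a subfield of K such that K is non-comparable with L, then ε ∉ L. -/
/-- In a non-Archimedean ordered field `K` with a topologically nilpotent
element `ε` (i.e. `0 < ε` and `εⁿ → 0`), if `L` is a subfield with which `K` is
non-comparable, then `ε ∉ L`. -/
theorem stmt_9 (K : Type*) [Field K] [LinearOrder K] [IsStrictOrderedRing K]
    (hna : ∃ x : K, ∀ n : ℕ, (n : K) < x)
    (ε : K) (hε : 0 < ε)
    (hnil : ∀ δ : K, 0 < δ → ∃ N : ℕ, ∀ n ≥ N, ε ^ n < δ)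
    (L : Subfield K) (hnc : ∃ y : K, ∀ a ∈ L, a < y) :
    ε ∉ L := by
  intro hεL
  obtain ⟨y, hy⟩ := hnc
  have hy0 : 0 < y := hy 0 L.zero_mem
  obtain ⟨N, hN⟩ := hnil y⁻¹ (inv_pos.mpr hy0)
  have h1 : ε ^ N < y⁻¹ := hN N le_rfl
  have hpow : (0:K) < ε ^ N := pow_pos hε N
  have h2 : y < (ε ^ N)⁻¹ := by
    rw [lt_inv_comm₀ hy0 hpow]
    exact h1
  have hmem : (ε ^ N)⁻¹ ∈ L := L.inv_mem (L.pow_mem hεL N)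
  exact absurd (hy _ hmem) (not_lt.mpr h2.le)
end

section
/- Let K be a non-Archimedean ordered field in which the element ε = the fixed topologically nilpotent element exists, and let L be a subfield of K, maximal among subfields with which K is non-comparable. Then every element of the maximal ideal M_L (infinitesimals with respect to L) is topologically nilpotent: if x ∈ M_L then lim xⁿ = 0. -/
open Polynomial Finset

/-- Auxiliary: if `y` exceeds every element of the subfield `L`, then polynomials over `L`
evaluated at `y` satisfy an upper bound by a power of `y`. -/
lemma aux_upper {K : Type*} [Field K] [LinearOrder K] [IsStrictOrderedRing K] (L : Subfield K) (y : K)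
    (hy : ∀ a ∈ L, a < y) (p : Polynomial K) (hp : ∀ n, p.coeff n ∈ L) :
    |p.eval y| ≤ y ^ (p.natDegree + 1) := by
  have hy0 : 0 < y := lt_of_le_of_lt (le_of_lt one_pos) (hy 1 (one_mem L))
  have hy1 : (1 : K) < y := hy 1 (one_mem L)
  have habs : ∀ c ∈ L, |c| ∈ L := by
    intro c hc
    rcases abs_cases c with ⟨h, _⟩ | ⟨h, _⟩
    · rw [h]; exact hc
    · rw [h]; exact neg_mem hc
  have hAL : (∑ i ∈ range (p.natDegree + 1), |p.coeff i|) ∈ L :=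
    sum_mem fun i _ => habs _ (hp i)
  calc |p.eval y| = |∑ i ∈ range (p.natDegree + 1), p.coeff i * y ^ i| := by
        rw [eval_eq_sum_range]
    _ ≤ ∑ i ∈ range (p.natDegree + 1), |p.coeff i * y ^ i| := abs_sum_le_sum_abs _ _
    _ ≤ ∑ i ∈ range (p.natDegree + 1), |p.coeff i| * y ^ p.natDegree := by
        refine sum_le_sum fun i hi => ?_
        rw [abs_mul, abs_pow, abs_of_pos hy0]
        exact mul_le_mul_of_nonneg_left
          (pow_le_pow_right₀ hy1.le (Nat.lt_succ_iff.mp (mem_range.mp hi))) (abs_nonneg _)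
    _ = (∑ i ∈ range (p.natDegree + 1), |p.coeff i|) * y ^ p.natDegree := by
        rw [sum_mul]
    _ ≤ y * y ^ p.natDegree :=
        mul_le_mul_of_nonneg_right (hy _ hAL).le (pow_nonneg hy0.le _)
    _ = y ^ (p.natDegree + 1) := by rw [pow_succ, mul_comm]

/-- Auxiliary: a nonzero polynomial over `L` evaluated at an element `y` exceeding all of `L`
is bounded below. -/
lemma aux_lower {K : Type*} [Field K] [LinearOrder K] [IsStrictOrderedRing K] (L : Subfield K) (y : K)
    (hy : ∀ a ∈ L, a < y) (p : Polynomial K) (hp0 : p ≠ 0) (hp : ∀ n, p.coeff n ∈ L) :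
    y ^ p.natDegree ≤ y * |p.eval y| := by
  have hy0 : 0 < y := lt_of_le_of_lt (le_of_lt one_pos) (hy 1 (one_mem L))
  have hy1 : (1 : K) < y := hy 1 (one_mem L)
  have habs : ∀ c ∈ L, |c| ∈ L := by
    intro c hc
    rcases abs_cases c with ⟨h, _⟩ | ⟨h, _⟩
    · rw [h]; exact hc
    · rw [h]; exact neg_mem hc
  have hlead : p.coeff p.natDegree ≠ 0 := by
    rw [← Polynomial.leadingCoeff]
    exact Polynomial.leadingCoeff_ne_zero.mpr hp0
  have hcpos : 0 < |p.coeff p.natDegree| := abs_pos.mpr hlead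
  rcases Nat.eq_zero_or_pos p.natDegree with hd | hd
  · -- constant polynomial
    have heval : p.eval y = p.coeff 0 := by
      rw [eval_eq_sum_range, hd]
      simp
    rw [hd, pow_zero, heval]
    have hinv : |p.coeff 0|⁻¹ ∈ L := inv_mem (habs _ (hp 0))
    have h1 : |p.coeff 0|⁻¹ < y := hy _ hinv
    have hc0 : (0:K) < |p.coeff 0| := hd ▸ hcpos
    calc (1:K) = |p.coeff 0|⁻¹ * |p.coeff 0| := (inv_mul_cancel₀ hc0.ne').symm
      _ ≤ y * |p.coeff 0| := mul_le_mul_of_nonneg_right h1.le hc0.le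
  · obtain ⟨e, he⟩ : ∃ e, p.natDegree = e + 1 :=
      ⟨p.natDegree - 1, (Nat.succ_pred_eq_of_pos hd).symm⟩
    set c := |p.coeff p.natDegree| with hc
    set A := ∑ i ∈ range p.natDegree, |p.coeff i| with hA
    have hAL : A ∈ L := sum_mem fun i _ => habs _ (hp i)
    have hcL : c ∈ L := habs _ (hp _)
    have heval : p.eval y = (∑ i ∈ range p.natDegree, p.coeff i * y ^ i) +
        p.coeff p.natDegree * y ^ p.natDegree := by
      rw [eval_eq_sum_range, Finset.sum_range_succ]
    have hT : |∑ i ∈ range p.natDegree, p.coeff i * y ^ i| ≤ A * y ^ e := by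
      calc |∑ i ∈ range p.natDegree, p.coeff i * y ^ i|
          ≤ ∑ i ∈ range p.natDegree, |p.coeff i * y ^ i| := abs_sum_le_sum_abs _ _
        _ ≤ ∑ i ∈ range p.natDegree, |p.coeff i| * y ^ e := by
            refine sum_le_sum fun i hi => ?_
            rw [abs_mul, abs_pow, abs_of_pos hy0]
            refine mul_le_mul_of_nonneg_left
              (pow_le_pow_right₀ hy1.le ?_) (abs_nonneg _)
            have := mem_range.mp hi
            omega
        _ = A * y ^ e := by rw [hA, sum_mul]
    -- key inequality: (A + 1) / c < y, i.e. A + 1 < c * y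
    have hkey : A + 1 < c * y := by
      have hm : (A + 1) * c⁻¹ ∈ L := mul_mem (add_mem hAL (one_mem L)) (inv_mem hcL)
      have h1 : (A + 1) * c⁻¹ < y := hy _ hm
      have := mul_lt_mul_of_pos_right h1 hcpos
      rw [mul_assoc, inv_mul_cancel₀ hcpos.ne', mul_one] at this
      linarith [this]
    have hblow : c * y ^ p.natDegree - A * y ^ e ≤ |p.eval y| := by
      rw [heval]
      have h1 : |p.coeff p.natDegree * y ^ p.natDegree| ≤
          |(∑ i ∈ range p.natDegree, p.coeff i * y ^ i) +
            p.coeff p.natDegree * y ^ p.natDegree| +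
          |∑ i ∈ range p.natDegree, p.coeff i * y ^ i| := by
        have e1 : p.coeff p.natDegree * y ^ p.natDegree =
            ((∑ i ∈ range p.natDegree, p.coeff i * y ^ i) +
              p.coeff p.natDegree * y ^ p.natDegree) +
            -(∑ i ∈ range p.natDegree, p.coeff i * y ^ i) := by ring
        calc |p.coeff p.natDegree * y ^ p.natDegree|
            = |((∑ i ∈ range p.natDegree, p.coeff i * y ^ i) +
                p.coeff p.natDegree * y ^ p.natDegree) +
              -(∑ i ∈ range p.natDegree, p.coeff i * y ^ i)| := by rw [← e1]
          _ ≤ |(∑ i ∈ range p.natDegree, p.coeff i * y ^ i) +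
                p.coeff p.natDegree * y ^ p.natDegree| +
              |-(∑ i ∈ range p.natDegree, p.coeff i * y ^ i)| := abs_add_le _ _
          _ = _ := by rw [abs_neg]
      have h2 : |p.coeff p.natDegree * y ^ p.natDegree| = c * y ^ p.natDegree := by
        rw [abs_mul, abs_pow, abs_of_pos hy0]
      linarith [hT, h1, h2]
    -- now combine
    have hye : (0:K) < y ^ e := pow_pos hy0 e
    have hyd : y ^ p.natDegree = y ^ e * y := by rw [he, pow_succ]
    rw [hyd] at hblow ⊢
    have hfact : 0 ≤ y ^ e * y * (c * y - A - 1) :=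
      mul_nonneg (mul_nonneg hye.le hy0.le) (by linarith)
    nlinarith [mul_le_mul_of_nonneg_left hblow hy0.le, hfact]

/-- Let `K` be a non-Archimedean ordered field containing a topologically
nilpotent element `ε`, and let `L` be maximal among the subfields with which `K` is
non-comparable. Then every element of the ideal `M_L` of infinitesimals with respect to `L`
is topologically nilpotent. -/
theorem stmt_10 (K : Type*) [Field K] [LinearOrder K] [IsStrictOrderedRing K]
    (hna : ∃ x : K, ∀ n : ℕ, (n : K) < x)
    (ε : K) (hε : 0 < ε)
    (hnil : ∀ δ : K, 0 < δ → ∃ N : ℕ, ∀ n ≥ N, ε ^ n < δ)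
    (L : Subfield K) (hnc : ∃ y : K, ∀ a ∈ L, a < y)
    (hmax : ∀ L' : Subfield K, L ≤ L' → (∃ y : K, ∀ a ∈ L', a < y) → L' = L)
    (x : K) (hx : ∀ a ∈ L, 0 < a → |x| < a) :
    ∀ δ : K, 0 < δ → ∃ N : ℕ, ∀ n ≥ N, |x ^ n| < δ := by
  intro δ hδ
  rcases eq_or_ne x 0 with rfl | hx0
  · refine ⟨1, fun n hn => ?_⟩
    rw [zero_pow (by omega : n ≠ 0), abs_zero]
    exact hδ
  have ht0 : 0 < |x| := abs_pos.mpr hx0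
  have ht1 : |x| < 1 := hx 1 (one_mem L) one_pos
  suffices h : ∃ n : ℕ, |x| ^ n < δ by
    obtain ⟨n, hn⟩ := h
    refine ⟨n, fun m hm => ?_⟩
    rw [abs_pow]
    exact lt_of_le_of_lt (pow_le_pow_of_le_one ht0.le ht1.le hm) hn
  by_contra hcon
  push_neg at hcon
  set y := |x|⁻¹ with hydef
  have hy0 : 0 < y := inv_pos.mpr ht0
  have hy : ∀ a ∈ L, a < y := by
    intro a ha
    rcases le_or_gt a 0 with h | h
    · exact lt_of_le_of_lt h hy0
    · have := hx a⁻¹ (inv_mem ha) (inv_pos.mpr h)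
      calc a = (a⁻¹)⁻¹ := (inv_inv a).symm
        _ < y := by
          apply inv_strictAnti₀ ht0 this
  have hy1 : (1:K) < y := hy 1 (one_mem L)
  have hzb : ∀ n : ℕ, y ^ n ≤ δ⁻¹ := by
    intro n
    rw [hydef, inv_pow]
    exact inv_anti₀ hδ (hcon n)
  -- the subfield generated by L and y
  set L' := Subfield.closure ((L : Set K) ∪ {y}) with hL'
  have hLsub : L ≤ L' := fun a ha => Subfield.subset_closure (Or.inl ha)
  have hrep : ∀ g ∈ Subring.closure ((L : Set K) ∪ {y}),
      ∃ p : Polynomial K, (∀ n, p.coeff n ∈ L) ∧ p.eval y = g := by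
    intro g hg
    induction hg using Subring.closure_induction with
    | mem a ha =>
        rcases ha with ha | ha
        · exact ⟨Polynomial.C a, fun n => by
            rw [coeff_C]; split <;> first | exact ha | exact zero_mem L, by simp⟩
        · rcases ha with rfl
          exact ⟨Polynomial.X, fun n => by
            rw [coeff_X]; split <;> first | exact one_mem L | exact zero_mem L, by simp⟩
    | zero => exact ⟨0, fun n => by simp [zero_mem], by simp⟩
    | one => exact ⟨1, fun n => by rw [coeff_one]; split <;> first | exact one_mem L | exact zero_mem L, by simp⟩
    | add a b _ _ iha ihb =>
        obtain ⟨p, hp, hpe⟩ := iha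
        obtain ⟨q, hq, hqe⟩ := ihb
        exact ⟨p + q, fun n => by rw [coeff_add]; exact add_mem (hp n) (hq n),
          by rw [eval_add, hpe, hqe]⟩
    | neg a _ iha =>
        obtain ⟨p, hp, hpe⟩ := iha
        exact ⟨-p, fun n => by rw [coeff_neg]; exact neg_mem (hp n),
          by rw [eval_neg, hpe]⟩
    | mul a b _ _ iha ihb =>
        obtain ⟨p, hp, hpe⟩ := iha
        obtain ⟨q, hq, hqe⟩ := ihb
        refine ⟨p * q, fun n => ?_, by rw [eval_mul, hpe, hqe]⟩
        rw [Polynomial.coeff_mul]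
        exact sum_mem fun c _ => mul_mem (hp c.1) (hq c.2)
  have hbound : ∀ f ∈ L', f < δ⁻¹ + 1 := by
    intro f hf
    rw [Subfield.mem_closure_iff] at hf
    obtain ⟨u, hu, v, hv, huv⟩ := hf
    obtain ⟨p, hp, hpe⟩ := hrep u hu
    obtain ⟨q, hq, hqe⟩ := hrep v hv
    rcases eq_or_ne v 0 with hv0 | hv0
    · rw [← huv, hv0, div_zero]
      positivity
    · have hq0 : q ≠ 0 := fun h => hv0 (by rw [← hqe, h, eval_zero])
      have h1 := aux_upper L y hy p hp
      have h2 := aux_lower L y hy q hq0 hq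
      have hvpos : 0 < |v| := abs_pos.mpr hv0
      -- from h2: 1 ≤ y * |v|
      have hq1 : (1:K) ≤ y * |v| := by
        rw [← hqe]
        exact le_trans (one_le_pow₀ hy1.le) h2
      have hvinv : |v|⁻¹ ≤ y := by
        rw [inv_le_iff_one_le_mul₀ hvpos]
        linarith [hq1]
      have h1' : |u| ≤ y ^ (p.natDegree + 1) := hpe ▸ h1
      have hfb : |f| ≤ y ^ (p.natDegree + 2) := by
        rw [← huv, abs_div, div_eq_mul_inv]
        calc |u| * |v|⁻¹ ≤ y ^ (p.natDegree + 1) * y :=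
              mul_le_mul h1' hvinv (inv_nonneg.mpr hvpos.le) (pow_nonneg hy0.le _)
          _ = y ^ (p.natDegree + 2) := (pow_succ y (p.natDegree + 1)).symm
      calc f ≤ |f| := le_abs_self f
        _ ≤ y ^ (p.natDegree + 2) := hfb
        _ ≤ δ⁻¹ := hzb _
        _ < δ⁻¹ + 1 := by linarith
  have hLL : L' = L := hmax L' hLsub ⟨δ⁻¹ + 1, hbound⟩
  have hyL : y ∈ L := by
    rw [← hLL]
    exact Subfield.subset_closure (Or.inr rfl)
  have htL : |x| ∈ L := by
    have := inv_mem hyL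
    rwa [hydef, inv_inv] at this
  exact absurd (hx |x| htL ht0) (lt_irrefl |x|)
end

section
/- Let K be a non-Archimedean ordered field and L a subfield with which K is non-comparable. Suppose (ε_n) is a strictly decreasing sequence of positive elements with ε_0 = 1, each ε_n (n ≥ 1) infinitesimal with respect to L, ε_n^i > ε_{n+1} for all i, and {x : |x| < ε_n} a neighbourhood basis of 0. Then for every n, the principal ideal ε_{n+1}·A_L of the ring A_L of non-infinitely-large elements satisfies {x ∈ A_L : |x| < ε_{n+1}} ⊆ ε_{n+1}A_L ⊆ {x ∈ A_L : |x| < ε_n}. In particular the order topology on A_L is a linear topology. -/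
/-- With `(ε_n)` a strictly decreasing sequence of positive elements, `ε_0 = 1`,
each `ε_n` (n ≥ 1) infinitesimal with respect to `L` and `ε_n^i > ε_{n+1}` for all `i`, the
principal ideal `ε_{n+1}·A_L` of the ring `A_L` of non-infinitely-large elements is squeezed
between the order-neighbourhoods `{x ∈ A_L : |x| < ε_{n+1}}` and `{x ∈ A_L : |x| < ε_n}`;
hence the order topology on `A_L` is linear. -/
theorem stmt_12 (K : Type*) [Field K] [LinearOrder K] [IsStrictOrderedRing K] (L : Subfield K)
    (hnc : ∃ y : K, ∀ a ∈ L, a < y)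
    (ε : ℕ → K) (h0 : ε 0 = 1) (hpos : ∀ n, 0 < ε n) (hanti : StrictAnti ε)
    (hinf : ∀ n : ℕ, 1 ≤ n → ∀ a ∈ L, 0 < a → ε n < a)
    (hpow : ∀ n i : ℕ, ε (n + 1) < ε n ^ i)
    (n : ℕ) :
    {x : K | (∃ a ∈ L, 0 < a ∧ |x| ≤ a) ∧ |x| < ε (n + 1)} ⊆
      {x : K | ∃ y : K, (∃ a ∈ L, 0 < a ∧ |y| ≤ a) ∧ x = ε (n + 1) * y} ∧
    {x : K | ∃ y : K, (∃ a ∈ L, 0 < a ∧ |y| ≤ a) ∧ x = ε (n + 1) * y} ⊆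
      {x : K | (∃ a ∈ L, 0 < a ∧ |x| ≤ a) ∧ |x| < ε n} := by
  have hp := hpos (n + 1)
  constructor
  · rintro x ⟨-, hx⟩
    refine ⟨x / ε (n + 1), ⟨1, L.one_mem, one_pos, ?_⟩, by field_simp⟩
    rw [abs_div, abs_of_pos hp, div_le_one hp]
    exact hx.le
  · rintro x ⟨y, ⟨a, haL, ha, hya⟩, rfl⟩
    have hε1 : ε (n + 1) < 1 := h0 ▸ hanti (Nat.succ_pos n)
    have habs : |ε (n + 1) * y| = ε (n + 1) * |y| := by
      rw [abs_mul, abs_of_pos hp]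
    have hle : ε (n + 1) * |y| ≤ ε (n + 1) * a := by
      exact mul_le_mul_of_nonneg_left hya hp.le
    refine ⟨⟨a, haL, ha, ?_⟩, ?_⟩
    · rw [habs]
      calc ε (n + 1) * |y| ≤ 1 * a := by
            apply mul_le_mul hε1.le hya (abs_nonneg y) zero_le_one
        _ = a := one_mul a
    · rw [habs]
      have hkey : ε (n + 1) * a < ε n := by
        rcases Nat.eq_zero_or_pos n with rfl | hn
        · have := hinf 1 le_rfl a⁻¹ (L.inv_mem haL) (by positivity)
          rw [h0]
          calc ε 1 * a < a⁻¹ * a := by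
                exact mul_lt_mul_of_pos_right this ha
            _ = 1 := inv_mul_cancel₀ ha.ne'
        · have h2 : ε (n + 1) < ε n ^ 2 := hpow n 2
          have hna : ε n < a⁻¹ := hinf n hn a⁻¹ (L.inv_mem haL) (by positivity)
          have h1 : ε n * a < 1 := by
            calc ε n * a < a⁻¹ * a := mul_lt_mul_of_pos_right hna ha
              _ = 1 := inv_mul_cancel₀ ha.ne'
          calc ε (n + 1) * a < ε n ^ 2 * a :=
                mul_lt_mul_of_pos_right h2 ha
            _ = ε n * (ε n * a) := by ring
            _ < ε n * 1 := mul_lt_mul_of_pos_left h1 (hpos n)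
            _ = ε n := mul_one _
      exact lt_of_le_of_lt hle hkey
end

section
/- Let K be a Cauchy complete ordered field and L a subfield with which K is non-comparable. Then the ring A_L of elements not infinitely large with respect to L is closed in K (in the order topology) and Cauchy complete, and the ideal M_L of infinitesimals with respect to L is closed in A_L. -/
/-- Over a Cauchy complete ordered field `K` (convergence expressed via
sequences, the order topology being first countable), for a subfield `L` with which `K` is
non-comparable: the ring `A_L` of non-infinitely-large elements is closed in `K` and Cauchy
complete, and the ideal `M_L` of infinitesimals is closed in `A_L`. -/
theorem stmt_13 (K : Type*) [Field K] [LinearOrder K] [IsStrictOrderedRing K]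
    (hcomplete : ∀ c : ℕ → K,
      (∀ δ : K, 0 < δ → ∃ N : ℕ, ∀ m ≥ N, ∀ n ≥ N, |c m - c n| < δ) →
      ∃ l : K, ∀ δ : K, 0 < δ → ∃ N : ℕ, ∀ n ≥ N, |c n - l| < δ)
    (L : Subfield K) (hnc : ∃ y : K, ∀ a ∈ L, a < y) :
    -- A_L is closed in K
    (∀ (c : ℕ → K) (l : K), (∀ n, ∃ a ∈ L, 0 < a ∧ |c n| ≤ a) →
      (∀ δ : K, 0 < δ → ∃ N : ℕ, ∀ n ≥ N, |c n - l| < δ) →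
      ∃ a ∈ L, 0 < a ∧ |l| ≤ a) ∧
    -- A_L is Cauchy complete
    (∀ c : ℕ → K, (∀ n, ∃ a ∈ L, 0 < a ∧ |c n| ≤ a) →
      (∀ δ : K, 0 < δ → ∃ N : ℕ, ∀ m ≥ N, ∀ n ≥ N, |c m - c n| < δ) →
      ∃ l : K, (∃ a ∈ L, 0 < a ∧ |l| ≤ a) ∧
        ∀ δ : K, 0 < δ → ∃ N : ℕ, ∀ n ≥ N, |c n - l| < δ) ∧
    -- M_L is closed in A_L
    (∀ (c : ℕ → K) (l : K), (∀ n, ∀ a ∈ L, 0 < a → |c n| < a) →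
      (∃ a ∈ L, 0 < a ∧ |l| ≤ a) →
      (∀ δ : K, 0 < δ → ∃ N : ℕ, ∀ n ≥ N, |c n - l| < δ) →
      ∀ a ∈ L, 0 < a → |l| < a) := by

  have closed : ∀ (c : ℕ → K) (l : K), (∀ n, ∃ a ∈ L, 0 < a ∧ |c n| ≤ a) →
      (∀ δ : K, 0 < δ → ∃ N : ℕ, ∀ n ≥ N, |c n - l| < δ) →
      ∃ a ∈ L, 0 < a ∧ |l| ≤ a := by
    intro c l hb hconv
    obtain ⟨N, hN⟩ := hconv 1 one_pos
    obtain ⟨a, haL, hapos, hca⟩ := hb N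
    refine ⟨a + 1, L.add_mem haL L.one_mem, by linarith, ?_⟩
    have := hN N le_rfl
    have h1 : |l| ≤ |c N| + |c N - l| := by
      have := abs_sub_abs_le_abs_sub l (c N)
      rw [abs_sub_comm] at this
      linarith
    linarith
  refine ⟨closed, ?_, ?_⟩
  · intro c hb hcau
    obtain ⟨l, hl⟩ := hcomplete c hcau
    exact ⟨l, closed c l hb hl, hl⟩
  · intro c l hinf _ hconv a haL hapos
    have h2 : (0:K) < a / 2 := by linarith
    obtain ⟨N, hN⟩ := hconv (a/2) h2
    have h3 := hinf N (a/2) (by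
      have : (2:K) ∈ L := by exact_mod_cast natCast_mem L 2
      exact L.div_mem haL this) h2
    have := hN N le_rfl
    have : |l| ≤ |c N| + |c N - l| := by
      have := abs_sub_abs_le_abs_sub l (c N)
      rw [abs_sub_comm] at this
      linarith
    linarith
end
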